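/- arXiv:1902.10012 — 3 statements merged into one kernel-verified Lean document; each statement's English description precedes it below -/
import Mathlib

section
/- Let π be a group and 𝔸 a normal subgroup of π. The subgroups K_m of π defined recursively by K_1 = π, K_2 = 𝔸 ⊔ Γ_2π, and K_m = [K_{m−1}, K_1] ⊔ [K_{m−2}, K_2] for m ≥ 3 form an N-series of π: every K_m is a normal subgroup of π, K_{m+1} ≤ K_m for all m ≥ 1, and [K_i, K_j] ≤ K_{i+j} for all i, j ≥ 1. -/
variable {π : Type*} [Group π]

/-- The series `(K_m)` associated to a (normal) subgroup `𝔸 = A` of `π`: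
`K_1 = π`, `K_2 = 𝔸 ⊔ Γ₂π` and `K_m = [K_{m-1}, K_1] ⊔ [K_{m-2}, K_2]` for `m ≥ 3`.
Here `Γ_m π = lowerCentralSeries π (m-1)`.  The value at `0` is a junk value `⊤`. -/
def altK (A : Subgroup π) : ℕ → Subgroup π
  | 0 => ⊤
  | 1 => ⊤
  | 2 => A ⊔ Subgroup.lowerCentralSeries (⊤ : Subgroup π) 1
  | (m + 3) => ⁅altK A (m + 2), altK A 1⁆ ⊔ ⁅altK A (m + 1), altK A 2⁆

private lemma altK_zero (A : Subgroup π) : altK A 0 = ⊤ := by rw [altK]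

private lemma altK_one (A : Subgroup π) : altK A 1 = ⊤ := by rw [altK]

private lemma altK_two (A : Subgroup π) : altK A 2 = A ⊔ Subgroup.lowerCentralSeries (⊤ : Subgroup π) 1 := by
  rw [altK]

private lemma altK_add_three (A : Subgroup π) (m : ℕ) :
    altK A (m + 3) = ⁅altK A (m + 2), altK A 1⁆ ⊔ ⁅altK A (m + 1), altK A 2⁆ := by
  simp only [altK]

private lemma altK_le1 (A : Subgroup π) (m : ℕ) :
    ⁅altK A (m + 2), altK A 1⁆ ≤ altK A (m + 3) :=
  le_sup_left.trans (altK_add_three A m).ge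

private lemma altK_le2 (A : Subgroup π) (m : ℕ) :
    ⁅altK A (m + 1), altK A 2⁆ ≤ altK A (m + 3) :=
  le_sup_right.trans (altK_add_three A m).ge

section Aux

variable {G : Type*} [Group G]

private lemma comm_le_iff {N H K : Subgroup G} (hN : N.Normal) :
    ⁅H, K⁆ ≤ N ↔
      ⁅H.map (QuotientGroup.mk' N), K.map (QuotientGroup.mk' N)⁆ = ⊥ := by
  rw [← Subgroup.map_commutator, Subgroup.map_eq_bot_iff, QuotientGroup.ker_mk']

private lemma commutator_sup_left_le {N H K L : Subgroup G} (hN : N.Normal)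
    (h1 : ⁅H, L⁆ ≤ N) (h2 : ⁅K, L⁆ ≤ N) : ⁅H ⊔ K, L⁆ ≤ N := by
  rw [comm_le_iff hN, Subgroup.commutator_eq_bot_iff_le_centralizer] at *
  rw [Subgroup.map_sup]
  exact sup_le h1 h2

private lemma three_subgroups {N H₁ H₂ H₃ : Subgroup G} (hN : N.Normal)
    (h1 : ⁅⁅H₂, H₃⁆, H₁⁆ ≤ N) (h2 : ⁅⁅H₃, H₁⁆, H₂⁆ ≤ N) : ⁅⁅H₁, H₂⁆, H₃⁆ ≤ N := by
  rw [comm_le_iff hN, Subgroup.map_commutator] at *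
  exact Subgroup.commutator_commutator_eq_bot_of_rotate h1 h2

end Aux

private lemma altK_normal (A : Subgroup π) (hA : A.Normal) :
    ∀ m : ℕ, (altK A m).Normal := by
  intro m
  induction m using Nat.strong_induction_on with
  | _ m ih =>
    match m with
    | 0 => rw [altK_zero]; infer_instance
    | 1 => rw [altK_one]; infer_instance
    | 2 =>
      rw [altK_two]
      have := hA
      exact Subgroup.sup_normal A (Subgroup.lowerCentralSeries (⊤ : Subgroup π) 1)
    | (k + 3) =>
      rw [altK_add_three]
      have h1 := ih (k + 2) (by omega)
      have h2 := ih (k + 1) (by omega)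
      have h3 := ih 1 (by omega)
      have h4 := ih 2 (by omega)
      exact Subgroup.sup_normal _ _

private lemma altK_comm_one (A : Subgroup π) (hA : A.Normal) :
    ∀ i : ℕ, 1 ≤ i → ⁅altK A i, altK A 1⁆ ≤ altK A (i + 1) := by
  intro i hi
  match i with
  | 1 =>
    rw [altK_one, show (1 : ℕ) + 1 = 2 by rfl, altK_two, Subgroup.top_lowerCentralSeries_one,
      commutator_def]
    exact le_sup_right
  | (k + 2) =>
    have h := altK_le1 A k
    rwa [show k + 3 = k + 2 + 1 by omega] at h

private lemma altK_comm_two (A : Subgroup π) :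
    ∀ i : ℕ, 1 ≤ i → ⁅altK A i, altK A 2⁆ ≤ altK A (i + 2) := by
  intro i hi
  match i with
  | (k + 1) =>
    have h := altK_le2 A k
    rwa [show k + 3 = k + 1 + 2 by omega] at h

private lemma altK_comm (A : Subgroup π) (hA : A.Normal) :
    ∀ j : ℕ, 1 ≤ j → ∀ i : ℕ, 1 ≤ i → ⁅altK A i, altK A j⁆ ≤ altK A (i + j) := by
  intro j
  induction j using Nat.strong_induction_on with
  | _ j ih =>
    intro hj i hi
    match j with
    | 1 => exact altK_comm_one A hA i hi
    | 2 => exact altK_comm_two A i hi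
    | (k + 3) =>
      have hN : (altK A (i + (k + 3))).Normal := altK_normal A hA _
      rw [Subgroup.commutator_comm, altK_add_three]
      apply commutator_sup_left_le hN
      · apply three_subgroups hN
        · calc ⁅⁅altK A 1, altK A i⁆, altK A (k + 2)⁆
              ≤ ⁅altK A (i + 1), altK A (k + 2)⁆ := by
                apply Subgroup.commutator_mono _ le_rfl
                rw [Subgroup.commutator_comm]
                exact altK_comm_one A hA i hi
            _ ≤ altK A ((i + 1) + (k + 2)) := ih (k + 2) (by omega) (by omega) _ (by omega)
            _ = altK A (i + (k + 3)) := by congr 1 <;> omega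
        · calc ⁅⁅altK A i, altK A (k + 2)⁆, altK A 1⁆
              ≤ ⁅altK A (i + (k + 2)), altK A 1⁆ :=
                Subgroup.commutator_mono (ih (k + 2) (by omega) (by omega) i hi) le_rfl
            _ ≤ altK A ((i + (k + 2)) + 1) := altK_comm_one A hA _ (by omega)
            _ = altK A (i + (k + 3)) := by congr 1 <;> omega
      · apply three_subgroups hN
        · calc ⁅⁅altK A 2, altK A i⁆, altK A (k + 1)⁆
              ≤ ⁅altK A (i + 2), altK A (k + 1)⁆ := by
                apply Subgroup.commutator_mono _ le_rfl
                rw [Subgroup.commutator_comm]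
                exact altK_comm_two A i hi
            _ ≤ altK A ((i + 2) + (k + 1)) := ih (k + 1) (by omega) (by omega) _ (by omega)
            _ = altK A (i + (k + 3)) := by congr 1 <;> omega
        · calc ⁅⁅altK A i, altK A (k + 1)⁆, altK A 2⁆
              ≤ ⁅altK A (i + (k + 1)), altK A 2⁆ :=
                Subgroup.commutator_mono (ih (k + 1) (by omega) (by omega) i hi) le_rfl
            _ ≤ altK A ((i + (k + 1)) + 2) := altK_comm_two A _ (by omega)
            _ = altK A (i + (k + 3)) := by congr 1 <;> omega

/-- The subgroups `K_m` form an N-series of `π`: each `K_m` is normal, the sequence is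
decreasing, and `[K_i, K_j] ≤ K_{i+j}` for all `i, j ≥ 1`. -/
theorem altK_isNSeries (π : Type*) [Group π] (A : Subgroup π) (hA : A.Normal) :
    (∀ m : ℕ, 1 ≤ m → (altK A m).Normal) ∧
    (∀ m : ℕ, 1 ≤ m → altK A (m + 1) ≤ altK A m) ∧
    (∀ i j : ℕ, 1 ≤ i → 1 ≤ j → ⁅altK A i, altK A j⁆ ≤ altK A (i + j)) := by
  refine ⟨fun m _ => altK_normal A hA m, ?_, fun i j hi hj => altK_comm A hA j hj i hi⟩
  intro m hm
  match m with
  | 1 => rw [altK_one]; exact le_top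
  | 2 =>
    have h2 : (altK A 2).Normal := altK_normal A hA 2
    have h1 : (altK A 1).Normal := altK_normal A hA 1
    have h := altK_add_three A 0
    rw [show (0 : ℕ) + 3 = 2 + 1 by omega, show (0 : ℕ) + 2 = 2 by omega,
      show (0 : ℕ) + 1 = 1 by omega] at h
    rw [h]
    exact sup_le (Subgroup.commutator_le_left _ _) (Subgroup.commutator_le_right _ _)
  | (k + 3) =>
    have h1 : (altK A (k + 3)).Normal := altK_normal A hA _
    have h := altK_add_three A (k + 1)
    rw [show k + 1 + 3 = k + 3 + 1 by omega, show k + 1 + 2 = k + 3 by omega,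
      show k + 1 + 1 = k + 2 by omega] at h
    rw [h]
    apply sup_le (Subgroup.commutator_le_left _ _)
    calc ⁅altK A (k + 2), altK A 2⁆ ≤ ⁅altK A (k + 2), altK A 1⁆ :=
          Subgroup.commutator_mono le_rfl (by rw [altK_one]; exact le_top)
      _ ≤ altK A (k + 3) := altK_le1 A k
end

section
/- Let F be a free group and N a normal subgroup of F such that the quotient F/N is isomorphic to a free group. Then [F, N] = Γ_2F ∩ N, i.e. the commutator subgroup [F, N] generated by commutators of elements of F with elements of N equals the intersection of the commutator subgroup of F with N. -/
/-- If F is a free group and N a normal subgroup of F such that F/N is (isomorphic to)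
a free group, then [F, N] = Γ₂F ⊓ N. -/
theorem stmt11 (X Y : Type*) (N : Subgroup (FreeGroup X)) [N.Normal]
    (e : (FreeGroup X ⧸ N) ≃* FreeGroup Y) :
    ⁅(⊤ : Subgroup (FreeGroup X)), N⁆ = commutator (FreeGroup X) ⊓ N := by
  set F := FreeGroup X
  set K := ⁅(⊤ : Subgroup F), N⁆ with hK
  haveI : K.Normal := Subgroup.commutator_normal ⊤ N
  apply le_antisymm
  · exact le_inf (Subgroup.commutator_mono le_top le_top)
      (Subgroup.commutator_le_right _ _)
  -- the hard inclusion
  set q : F →* F ⧸ N := QuotientGroup.mk' N with hq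
  set s : FreeGroup Y →* F := FreeGroup.lift (fun y => (e.symm (FreeGroup.of y)).out) with hs
  have hqs : ∀ w, q (s w) = e.symm w := by
    have hcomp : q.comp s = e.symm.toMonoidHom := by
      apply FreeGroup.ext_hom
      intro y
      simp only [hs, hq, MonoidHom.comp_apply, FreeGroup.lift_apply_of, QuotientGroup.mk'_apply, MulEquiv.coe_toMonoidHom]
      exact Quotient.out_eq _
    intro w
    have := congrArg (fun f : FreeGroup Y →* F ⧸ N => f w) hcomp
    simpa using this
  set r : F →* F := s.comp (e.toMonoidHom.comp q) with hr
  have hqr : ∀ x, q (r x) = q x := by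
    intro x
    simp [hr, hqs]
  have hrN : ∀ n ∈ N, r n = 1 := by
    intro n hn
    have h1 : q n = 1 := (QuotientGroup.eq_one_iff n).mpr hn
    simp [hr, h1]
  set π : F →* F ⧸ K := QuotientGroup.mk' K with hπ
  have fmem : ∀ x : F, x * (r x)⁻¹ ∈ N := by
    intro x
    have : q (x * (r x)⁻¹) = 1 := by
      rw [map_mul, map_inv, hqr, mul_inv_cancel]
    exact (QuotientGroup.eq_one_iff _).mp this
  have hcent : ∀ n ∈ N, ∀ g : F, Commute (π n) (π g) := by
    intro n hn g
    have hcomm := Subgroup.commutator_mem_commutator (Subgroup.mem_top g) hn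
    have : π _ = 1 := (QuotientGroup.eq_one_iff _).mpr hcomm
    rw [map_commutatorElement] at this
    exact (commutatorElement_eq_one_iff_commute.mp this).symm
  have hcent' : ∀ x : F, ∀ g : F, Commute (π (x * (r x)⁻¹)) (π g) := fun x g =>
    hcent _ (fmem x) g
  set fhom : F →* F ⧸ K :=
    { toFun := fun x => π (x * (r x)⁻¹)
      map_one' := by simp
      map_mul' := by
        intro x y
        have h := hcent' y (r x)
        simp only [map_mul, map_inv, map_inv π (r x * r y), map_inv π (r x), map_inv π (r y)]
        have h' : π y * (π (r y))⁻¹ * (π (r x))⁻¹ = (π (r x))⁻¹ * (π y * (π (r y))⁻¹) := by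
          have := (hcent' y (r x)).inv_right
          simpa [map_mul, map_inv, map_inv π (r y)] using this.eq
        rw [mul_inv_rev, mul_assoc (π x) (π y), ← mul_assoc (π y), h', ← mul_assoc] } with hfhom
  have hker : commutator F ≤ fhom.ker := by
    rw [commutator_def]
    rw [Subgroup.commutator_le]
    intro a _ b _
    have := map_commutatorElement fhom a b
    have hc : Commute (fhom a) (fhom b) := by
      show Commute (π (a * (r a)⁻¹)) (π (b * (r b)⁻¹))
      exact hcent' a _
    rw [MonoidHom.mem_ker, this, commutatorElement_eq_one_iff_commute]
    exact hc
  rintro x ⟨hxc, hxN⟩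
  have h1 : fhom x = 1 := hker hxc
  have h2 : π x = 1 := by
    have : r x = 1 := hrN x hxN
    simpa [hfhom, this] using h1
  exact (QuotientGroup.eq_one_iff x).mp h2
end

section
/- Let F be a free group and N a normal subgroup of F such that the quotient F/N is isomorphic to a free group. Let K_3 := Γ_3F ⊔ [F, N]. Then N ∩ K_3 = [F, N]. Equivalently, the natural map N/[F,N] → K_2/K_3 (where K_2 = N ⊔ Γ_2F) induced by the inclusion N ⊆ K_2 is injective. -/
open scoped commutatorElement

/-- Multiplying the arguments of a commutator by central elements does not change it. -/
lemma aux_comm_central {G : Type*} [Group G] (a b z w : G) (hz : ∀ g : G, Commute z g)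
    (hw : ∀ g : G, Commute w g) : ⁅a*z, b*w⁆ = ⁅a,b⁆ := by
  have conj : ∀ x : G, (a*z) * x * (a*z)⁻¹ = a * x * a⁻¹ := by
    intro x
    rw [mul_inv_rev, show (a*z)*x = a*(x*z) by rw [mul_assoc, ← (hz x).eq]]
    group
  rw [commutatorElement_def, commutatorElement_def, conj (b*w), mul_inv_rev,
    ← mul_assoc a b w, mul_assoc (a*b) w a⁻¹, (hw a⁻¹).eq]
  group

/-- If F is a free group and N a normal subgroup of F such that F/N is (isomorphic to)
a free group, then with K₃ = Γ₃F ⊔ [F, N] one has N ⊓ K₃ = [F, N]; equivalently the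
natural map N/[F,N] → K₂/K₃ is injective. -/
theorem stmt12 (X Y : Type*) (N : Subgroup (FreeGroup X)) [N.Normal]
    (e : (FreeGroup X ⧸ N) ≃* FreeGroup Y) :
    N ⊓ ((⊤ : Subgroup (FreeGroup X)).lowerCentralSeries 2 ⊔ ⁅(⊤ : Subgroup (FreeGroup X)), N⁆)
      = ⁅(⊤ : Subgroup (FreeGroup X)), N⁆ := by
  set F := FreeGroup X
  set M : Subgroup F := ⁅(⊤ : Subgroup F), N⁆ with hM
  -- the quotient map
  let mk : F →* F ⧸ N := QuotientGroup.mk' N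
  -- a section of the quotient map, using freeness of F/N
  let τ : FreeGroup Y →* F := FreeGroup.lift fun y => (e.symm (FreeGroup.of y)).out
  have hτ : ∀ y : Y, mk (τ (FreeGroup.of y)) = e.symm (FreeGroup.of y) := by
    intro y
    simp only [τ, FreeGroup.lift_apply_of]
    exact QuotientGroup.out_eq' _
  have hτ' : ∀ q : FreeGroup Y, mk (τ q) = e.symm q := by
    intro q
    have : (mk.comp τ) = (e.symm : FreeGroup Y →* F ⧸ N) := by
      apply FreeGroup.ext_hom
      intro y
      simpa using hτ y
    exact DFunLike.congr_fun this q
  let π : F →* F := τ.comp ((e : F ⧸ N →* FreeGroup Y).comp mk)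
  have hπ : ∀ x : F, mk (π x) = mk x := by
    intro x
    show mk (τ (e (mk x))) = mk x
    rw [hτ', MulEquiv.symm_apply_apply]
  have hπN : ∀ n ∈ N, π n = 1 := by
    intro n hn
    show τ (e (mk n)) = 1
    have : mk n = 1 := (QuotientGroup.eq_one_iff n).mpr hn
    rw [this, map_one, map_one]
  -- pass to the quotient by M = [F, N]
  haveI : M.Normal := Subgroup.commutator_normal ⊤ N
  let p : F →* F ⧸ M := QuotientGroup.mk' M
  -- p(N) is central in F/M
  have hcen : ∀ n ∈ N, ∀ g : F ⧸ M, Commute (p n) g := by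
    intro n hn g
    obtain ⟨f, rfl⟩ := QuotientGroup.mk'_surjective M g
    have hc : ⁅f, n⁆ ∈ M := Subgroup.commutator_mem_commutator (Subgroup.mem_top f) hn
    have h1 : p ⁅f, n⁆ = 1 := (QuotientGroup.eq_one_iff _).mpr hc
    rw [commutatorElement_def, map_mul, map_mul, map_mul, map_inv, map_inv] at h1
    have h2 : p f * p n * (p f)⁻¹ = p n := mul_inv_eq_one.mp h1
    rw [Commute, SemiconjBy]
    calc p n * p f = (p f * p n * (p f)⁻¹) * p f := by rw [h2]
      _ = p f * p n := by group
  -- π x differs from x by a central element of F/M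
  have hdiff : ∀ x : F, p (π x) = p x * p (x⁻¹ * π x) ∧ x⁻¹ * π x ∈ N := by
    intro x
    constructor
    · rw [← map_mul]; congr 1; exact (mul_inv_cancel_left x (π x)).symm
    · obtain ⟨z, hzN, hzx⟩ := (QuotientGroup.mk'_eq_mk' N).mp (hπ x).symm
      have hz2 : x⁻¹ * π x = z := by rw [← hzx]; exact inv_mul_cancel_left x z
      rw [hz2]; exact hzN
  -- p ∘ π and p agree on the commutator subgroup
  have hkey : ∀ x ∈ commutator F, p (π x) = p x := by
    intro x hx
    rw [commutator_eq_closure] at hx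
    induction hx using Subgroup.closure_induction with
    | mem g hg =>
        obtain ⟨a, b, rfl⟩ := hg
        have ha := hdiff a
        have hb := hdiff b
        rw [map_commutatorElement, map_commutatorElement, ha.1, hb.1]
        exact aux_comm_central (p a) (p b) _ _ (fun g => hcen _ ha.2 g) (fun g => hcen _ hb.2 g)
    | one => simp
    | mul g h _ _ ihg ihh => simp only [map_mul, ihg, ihh]
    | inv g _ ihg => simp only [map_inv, ihg]
  -- now finish
  apply le_antisymm
  · intro x hx
    obtain ⟨hxN, hx2⟩ := hx
    have hxc : x ∈ commutator F := by
      have h1 : (⊤ : Subgroup F).lowerCentralSeries 2 ≤ commutator F := by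
        rw [← Subgroup.top_lowerCentralSeries_one]
        exact (⊤ : Subgroup F).lowerCentralSeries_antitone (by norm_num)
      have h2 : M ≤ commutator F := by
        rw [commutator]
        exact Subgroup.commutator_mono le_rfl le_top
      exact (sup_le h1 h2) hx2
    have := hkey x hxc
    rw [hπN x hxN, map_one] at this
    exact (QuotientGroup.eq_one_iff x).mp this.symm
  · exact le_inf (Subgroup.commutator_le_right ⊤ N) le_sup_right
end
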